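/- Let c ≥ 0 and let X_1,…,X_n be i.i.d. random variables with values in [0,1] satisfying P(X_1 ≤ u) ≥ u − c for all u ∈ [0,1], and let X_(k) denote the k-th smallest order statistic for 1 ≤ k ≤ n. Then X_(k) is stochastically dominated by B + c, where B ∼ Beta(k, n−k+1): for every t ∈ ℝ, P( X_(k) ≤ t ) ≥ P( B + c ≤ t ). -/

import Mathlib

open MeasureTheory ProbabilityTheory


section AuxA
open Finset

noncomputable def Ftail (k n : ℕ) (s : ℝ) : ℝ :=
  ∑ j ∈ Finset.Icc k n, (n.choose j : ℝ) * s ^ j * (1 - s) ^ (n - j)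

lemma natId1 {n j : ℕ} (hj : 1 ≤ j) (hn : 1 ≤ n) :
    n.choose j * j = n * (n - 1).choose (j - 1) := by
  obtain ⟨m, rfl⟩ := Nat.exists_eq_add_of_le hn
  obtain ⟨i, rfl⟩ := Nat.exists_eq_add_of_le hj
  simp only [Nat.add_sub_cancel_left, Nat.add_sub_cancel]
  rw [Nat.add_comm 1 m, Nat.add_comm 1 i, ← Nat.add_one_mul_choose_eq]

lemma natId2 (n j : ℕ) (hn : 1 ≤ n) :
    n.choose j * (n - j) = n * (n - 1).choose j := by
  obtain ⟨m, rfl⟩ := Nat.exists_eq_add_of_le hn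
  rw [← Nat.choose_succ_right_eq, Nat.add_sub_cancel_left, Nat.add_comm 1 m,
    ← Nat.add_one_mul_choose_eq]

lemma hasDerivAt_Ftail {k n : ℕ} (hk1 : 1 ≤ k) (hkn : k ≤ n) (s : ℝ) :
    HasDerivAt (Ftail k n)
      ((n : ℝ) * ((n - 1).choose (k - 1)) * s ^ (k - 1) * (1 - s) ^ (n - k)) s := by
  have hn : 1 ≤ n := le_trans hk1 hkn
  set g : ℕ → ℝ := fun j => (n : ℝ) * ((n - 1).choose (j - 1)) * s ^ (j - 1) * (1 - s) ^ (n - j)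
    with hg
  have hterm : ∀ j ∈ Finset.Icc k n,
      HasDerivAt (fun x : ℝ => (n.choose j : ℝ) * x ^ j * (1 - x) ^ (n - j))
        (g j - g (j + 1)) s := by
    intro j hj
    simp only [Finset.mem_Icc] at hj
    have hj1 : 1 ≤ j := le_trans hk1 hj.1
    have h1 : HasDerivAt (fun x : ℝ => x ^ j) ((j : ℝ) * s ^ (j - 1)) s := hasDerivAt_pow j s
    have h2 : HasDerivAt (fun x : ℝ => (1 - x) ^ (n - j))
        (-(((n - j : ℕ) : ℝ) * (1 - s) ^ (n - j - 1))) s := by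
      have hinner : HasDerivAt (fun x : ℝ => 1 - x) (-1) s := by
        exact (hasDerivAt_id' s).const_sub 1
      have h3 := (hasDerivAt_pow (n - j) (1 - s)).comp s hinner
      simp only [mul_neg, mul_one] at h3
      exact h3
    have := ((h1.const_mul ((n.choose j : ℝ))).mul h2)
    refine this.congr_deriv ?_
    symm
    have e1 : ((n.choose j : ℝ)) * (j : ℝ) = (n : ℝ) * ((n - 1).choose (j - 1)) := by
      exact_mod_cast congrArg (Nat.cast : ℕ → ℝ) (natId1 hj1 hn)
    have e2 : ((n.choose j : ℝ)) * ((n - j : ℕ) : ℝ) = (n : ℝ) * ((n - 1).choose j) := by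
      exact_mod_cast congrArg (Nat.cast : ℕ → ℝ) (natId2 n j hn)
    have hnj : n - (j + 1) = n - j - 1 := by omega
    have hjj : j + 1 - 1 = j := rfl
    simp only [hg, hnj, hjj]
    calc (n : ℝ) * ((n - 1).choose (j - 1)) * s ^ (j - 1) * (1 - s) ^ (n - j)
          - (n : ℝ) * ((n - 1).choose j) * s ^ j * (1 - s) ^ (n - j - 1)
        = ((n.choose j : ℝ)) * (j : ℝ) * s ^ (j - 1) * (1 - s) ^ (n - j)
          - ((n.choose j : ℝ)) * ((n - j : ℕ) : ℝ) * s ^ j * (1 - s) ^ (n - j - 1) := by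
          rw [e1, e2]
      _ = (n.choose j : ℝ) * ((j : ℝ) * s ^ (j - 1)) * (1 - s) ^ (n - j)
          + (n.choose j : ℝ) * s ^ j * -(((n - j : ℕ) : ℝ) * (1 - s) ^ (n - j - 1)) := by ring
  have hsum : HasDerivAt (Ftail k n) (∑ j ∈ Finset.Icc k n, (g j - g (j + 1))) s :=
    HasDerivAt.fun_sum hterm
  have htel : ∑ j ∈ Finset.Icc k n, (g j - g (j + 1)) = g k := by
    rw [← Finset.Ico_add_one_right_eq_Icc, Finset.sum_Ico_eq_sum_range]
    have htel' := Finset.sum_range_sub' (fun i => g (k + i)) (n.succ - k)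
    simp only [← Nat.add_assoc, Nat.succ_eq_add_one] at htel'
    rw [htel']
    have h1 : k + (n.succ - k) = n + 1 := by omega
    rw [Nat.add_zero, h1]
    have h2 : g (n + 1) = 0 := by
      simp only [hg, Nat.add_sub_cancel]
      rw [Nat.choose_eq_zero_of_lt (by omega)]
      simp
    rw [h2, sub_zero]
  rw [htel] at hsum
  exact hsum


lemma Ftail_zero {k n : ℕ} (hk1 : 1 ≤ k) : Ftail k n 0 = 0 := by
  apply Finset.sum_eq_zero
  intro j hj
  simp only [Finset.mem_Icc] at hj
  rw [zero_pow (by omega)]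
  ring

lemma Ftail_one {k n : ℕ} (hkn : k ≤ n) : Ftail k n 1 = 1 := by
  rw [Ftail, Finset.sum_eq_single n]
  · simp
  · intro j hj hjn
    simp only [Finset.mem_Icc] at hj
    rw [sub_self, zero_pow (by omega)]
    ring
  · intro h
    exact absurd (Finset.mem_Icc.mpr ⟨hkn, le_refl n⟩) h

lemma Dpos {k n : ℕ} (hk1 : 1 ≤ k) (hkn : k ≤ n) :
    (0 : ℝ) < (n : ℝ) * ((n - 1).choose (k - 1)) := by
  have h1 : 0 < n := by omega
  have h2 : 0 < (n - 1).choose (k - 1) := Nat.choose_pos (by omega)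
  positivity

lemma integral_identity {k n : ℕ} (hk1 : 1 ≤ k) (hkn : k ≤ n) (a b : ℝ) :
    ∫ x in a..b, x ^ (k - 1) * (1 - x) ^ (n - k)
      = (Ftail k n b - Ftail k n a) / ((n : ℝ) * ((n - 1).choose (k - 1))) := by
  set D : ℝ := (n : ℝ) * ((n - 1).choose (k - 1)) with hD
  have hD0 : D ≠ 0 := ne_of_gt (Dpos hk1 hkn)
  have hderiv : ∀ x ∈ Set.uIcc a b, HasDerivAt (fun s => Ftail k n s / D)
      (x ^ (k - 1) * (1 - x) ^ (n - k)) x := by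
    intro x _
    have := (hasDerivAt_Ftail hk1 hkn x).div_const D
    refine this.congr_deriv ?_
    field_simp
    ring
  have hint : IntervalIntegrable (fun x : ℝ => x ^ (k - 1) * (1 - x) ^ (n - k))
      volume a b := by
    apply Continuous.intervalIntegrable
    continuity
  rw [intervalIntegral.integral_eq_sub_of_hasDerivAt hderiv hint]
  ring


lemma setInt_eq {k n : ℕ} {a b : ℝ} (hab : a ≤ b) :
    ∫ x in Set.Icc a b, x ^ (k - 1) * (1 - x) ^ (n - k)
      = ∫ x in a..b, x ^ (k - 1) * (1 - x) ^ (n - k) := by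
  rw [intervalIntegral.integral_of_le hab, MeasureTheory.integral_Icc_eq_integral_Ioc]



lemma binomial_count {Ω : Type*} [MeasurableSpace Ω] (P : Measure Ω) [IsProbabilityMeasure P]
    {n : ℕ} (X : Fin n → Ω → ℝ) (hmeas : ∀ i, Measurable (X i))
    (hiid : iIndepFun X P)
    (hident : ∀ i j, IdentDistrib (X i) (X j) P P) (t : ℝ) (k : ℕ) (hkn : k ≤ n)
    (hn : 0 < n) :
    (P {ω | k ≤ (Finset.univ.filter fun i => X i ω ≤ t).card}).toReal
      = Ftail k n ((P {ω | X ⟨0, hn⟩ ω ≤ t}).toReal) := by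
  classical
  set i0 : Fin n := ⟨0, hn⟩ with hi0
  set A : Fin n → Set Ω := fun i => X i ⁻¹' Set.Iic t with hA
  have hAmeas : ∀ i, MeasurableSet (A i) := fun i => (hmeas i) measurableSet_Iic
  set pe : ENNReal := P (A i0) with hpe_def
  have hpe : ∀ i, P (A i) = pe := fun i => (hident i i0).measure_mem_eq measurableSet_Iic
  have hqe : ∀ i, P (A i)ᶜ = 1 - pe := fun i => by
    rw [prob_compl_eq_one_sub (hAmeas i), hpe i]
  set B : Finset (Fin n) → Set Ω := fun S => ⋂ i, (if i ∈ S then A i else (A i)ᶜ) with hB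
  have hBmeas : ∀ S, MeasurableSet (B S) := by
    intro S
    apply MeasurableSet.iInter
    intro i
    split
    · exact hAmeas i
    · exact (hAmeas i).compl
  have hBchar : ∀ (S : Finset (Fin n)) (ω : Ω),
      ω ∈ B S ↔ (Finset.univ.filter fun i => X i ω ≤ t) = S := by
    intro S ω
    simp only [hB, Set.mem_iInter]
    constructor
    · intro h
      ext i
      simp only [Finset.mem_filter, Finset.mem_univ, true_and]
      have hi := h i
      by_cases hiS : i ∈ S
      · rw [if_pos hiS] at hi
        exact ⟨fun _ => hiS, fun _ => hi⟩
      · rw [if_neg hiS] at hi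
        exact ⟨fun hx => absurd hx hi, fun hx => absurd hx hiS⟩
    · rintro rfl i
      by_cases hx : X i ω ≤ t
      · rw [if_pos (by simp [hx])]
        exact hx
      · rw [if_neg (by simp [hx])]
        exact hx
  have hBprob : ∀ S : Finset (Fin n), P (B S) = pe ^ S.card * (1 - pe) ^ (n - S.card) := by
    intro S
    have hmeasc : ∀ i, MeasurableSet[(inferInstance : MeasurableSpace ℝ).comap (X i)]
        (if i ∈ S then A i else (A i)ᶜ) := by
      intro i
      have hbase : MeasurableSet[(inferInstance : MeasurableSpace ℝ).comap (X i)] (A i) :=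
        ⟨Set.Iic t, measurableSet_Iic, rfl⟩
      split
      · exact hbase
      · exact hbase.compl
    rw [hB]
    rw [hiid.meas_iInter hmeasc]
    rw [← Finset.prod_filter_mul_prod_filter_not Finset.univ (· ∈ S)]
    have e1 : ∀ i ∈ Finset.univ.filter (· ∈ S), P (if i ∈ S then A i else (A i)ᶜ) = pe := by
      intro i hi
      simp only [Finset.mem_filter] at hi
      rw [if_pos hi.2, hpe]
    have e2 : ∀ i ∈ Finset.univ.filter (¬ · ∈ S), P (if i ∈ S then A i else (A i)ᶜ) = 1 - pe := by
      intro i hi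
      simp only [Finset.mem_filter] at hi
      rw [if_neg hi.2, hqe]
    rw [Finset.prod_congr rfl e1, Finset.prod_congr rfl e2, Finset.prod_const,
      Finset.prod_const]
    congr 1
    · congr 1
      simp [Finset.filter_mem_eq_inter]
    · congr 1
      have : Finset.univ.filter (fun x => x ∉ S) = Sᶜ := by
        ext i; simp
      rw [this, Finset.card_compl, Fintype.card_fin]
  set 𝒮 : Finset (Finset (Fin n)) := Finset.univ.filter (fun S => k ≤ S.card) with h𝒮
  have hunion : {ω | k ≤ (Finset.univ.filter fun i => X i ω ≤ t).card}
      = ⋃ S ∈ 𝒮, B S := by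
    ext ω
    simp only [Set.mem_setOf_eq, Set.mem_iUnion, exists_prop, h𝒮, Finset.mem_filter,
      Finset.mem_univ, true_and]
    constructor
    · intro h
      exact ⟨_, h, (hBchar _ ω).mpr rfl⟩
    · rintro ⟨S, hScard, hωS⟩
      rw [(hBchar S ω).mp hωS]
      exact hScard
  have hdisj : Set.PairwiseDisjoint (↑𝒮) B := by
    intro S _ S' _ hne
    exact Set.disjoint_left.mpr fun ω h1 h2 =>
      hne (((hBchar _ _).mp h1).symm.trans ((hBchar _ _).mp h2))
  rw [hunion, measure_biUnion_finset hdisj (fun S _ => hBmeas S)]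
  have hre : 𝒮 = (Finset.Icc k n).biUnion (fun j => Finset.powersetCard j Finset.univ) := by
    ext S
    simp only [h𝒮, Finset.mem_filter, Finset.mem_univ, true_and, Finset.mem_biUnion,
      Finset.mem_Icc, Finset.mem_powersetCard]
    constructor
    · intro h
      exact ⟨S.card, ⟨h, by simpa using Finset.card_le_univ S⟩, Finset.subset_univ S, rfl⟩
    · rintro ⟨j, ⟨hkj, _⟩, _, rfl⟩
      exact hkj
  have hdisj2 : Set.PairwiseDisjoint (↑(Finset.Icc k n))
      (fun j => Finset.powersetCard j (Finset.univ : Finset (Fin n))) :=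
    fun a _ b _ hab => Finset.pairwise_disjoint_powersetCard Finset.univ hab
  rw [Finset.sum_congr rfl (fun S _ => hBprob S)]
  rw [hre]
  rw [Finset.sum_biUnion hdisj2]
  have hinner : ∀ j ∈ Finset.Icc k n,
      ∑ S ∈ Finset.powersetCard j (Finset.univ : Finset (Fin n)), pe ^ S.card * (1 - pe) ^ (n - S.card)
        = (n.choose j : ENNReal) * pe ^ j * (1 - pe) ^ (n - j) := by
    intro j hj
    rw [Finset.sum_congr rfl (fun S hS => by
      rw [(Finset.mem_powersetCard.mp hS).2]), Finset.sum_const,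
      Finset.card_powersetCard, Finset.card_univ, Fintype.card_fin, nsmul_eq_mul]
    ring
  rw [Finset.sum_congr rfl hinner]
  -- now take toReal
  have hpe1 : pe ≤ 1 := prob_le_one
  have hpet : pe ≠ ⊤ := measure_ne_top P _
  have hqet : (1 : ENNReal) - pe ≠ ⊤ := by
    exact ne_top_of_le_ne_top ENNReal.one_ne_top tsub_le_self
  have hterm : ∀ j ∈ Finset.Icc k n,
      ((n.choose j : ENNReal) * pe ^ j * (1 - pe) ^ (n - j)) ≠ ⊤ := by
    intro j _
    exact ENNReal.mul_ne_top (ENNReal.mul_ne_top (ENNReal.natCast_ne_top _)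
      (ENNReal.pow_ne_top hpet)) (ENNReal.pow_ne_top hqet)
  rw [ENNReal.toReal_sum hterm]
  apply Finset.sum_congr rfl
  intro j _
  rw [ENNReal.toReal_mul, ENNReal.toReal_mul, ENNReal.toReal_pow, ENNReal.toReal_pow,
    ENNReal.toReal_natCast, ENNReal.toReal_sub_of_le hpe1 ENNReal.one_ne_top,
    ENNReal.toReal_one]
  have : P {ω | X i0 ω ≤ t} = pe := by
    rw [hpe_def]
    rfl
  rw [this]

end AuxA

/-- The CDF of the `Beta(k, n - k + 1)` distribution (for `1 ≤ k ≤ n`), whose density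
on `[0,1]` is proportional to `x^(k-1)·(1-x)^(n-k)`. -/
noncomputable def betaCDF (k n : ℕ) (t : ℝ) : ℝ :=
  (∫ x in Set.Icc (0 : ℝ) 1 ∩ Set.Iic t, x ^ (k - 1) * (1 - x) ^ (n - k)) /
    ∫ x in Set.Icc (0 : ℝ) 1, x ^ (k - 1) * (1 - x) ^ (n - k)

/-- The `k`-th smallest order statistic (0-indexed) of the tuple `x`. -/
noncomputable def orderStat {n : ℕ} (x : Fin n → ℝ) (k : Fin n) : ℝ :=
  x (Tuple.sort x k)


section AuxB
open Finset
lemma betaCDF_eq {k n : ℕ} (hk1 : 1 ≤ k) (hkn : k ≤ n) {s : ℝ} (hs0 : 0 ≤ s) (hs1 : s ≤ 1) :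
    betaCDF k n s = Ftail k n s := by
  have hset : Set.Icc (0:ℝ) 1 ∩ Set.Iic s = Set.Icc 0 s := by
    ext x
    simp only [Set.mem_inter_iff, Set.mem_Icc, Set.mem_Iic]
    constructor
    · rintro ⟨⟨h1, _⟩, h3⟩; exact ⟨h1, h3⟩
    · rintro ⟨h1, h2⟩; exact ⟨⟨h1, le_trans h2 hs1⟩, h2⟩
  rw [betaCDF, hset, setInt_eq hs0, setInt_eq (zero_le_one), integral_identity hk1 hkn,
    integral_identity hk1 hkn, Ftail_zero hk1, Ftail_one hkn]
  have hD0 : ((n : ℝ) * ((n - 1).choose (k - 1))) ≠ 0 := ne_of_gt (Dpos hk1 hkn)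
  field_simp
  rw [sub_zero, mul_assoc, mul_div_assoc, div_self hD0]
  ring

lemma Ftail_mono {k n : ℕ} (hk1 : 1 ≤ k) (hkn : k ≤ n) {s p : ℝ}
    (hs0 : 0 ≤ s) (hsp : s ≤ p) (hp1 : p ≤ 1) : Ftail k n s ≤ Ftail k n p := by
  have h := integral_identity hk1 hkn (k := k) (n := n) s p
  have hnn : 0 ≤ ∫ x in s..p, x ^ (k - 1) * (1 - x) ^ (n - k) := by
    apply intervalIntegral.integral_nonneg hsp
    intro x hx
    have hx0 : 0 ≤ x := le_trans hs0 hx.1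
    have hx1 : x ≤ 1 := le_trans hx.2 hp1
    exact mul_nonneg (pow_nonneg hx0 _) (pow_nonneg (by linarith) _)
  rw [h] at hnn
  have hD := Dpos (n := n) hk1 hkn
  have h2 := mul_nonneg hnn (le_of_lt hD)
  rw [div_mul_cancel₀ _ (ne_of_gt hD)] at h2
  linarith

section Aux2
open Finset


lemma orderStat_le_iff {n : ℕ} (x : Fin n → ℝ) (k : ℕ) (hk1 : 1 ≤ k) (hkn : k ≤ n) (t : ℝ) :
    orderStat x ⟨k - 1, Nat.sub_one_lt_of_le hk1 hkn⟩ ≤ t ↔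
      k ≤ (Finset.univ.filter fun i => x i ≤ t).card := by
  set σ := Tuple.sort x with hσ
  have hmono : Monotone (x ∘ σ) := Tuple.monotone_sort x
  set m : Fin n := ⟨k - 1, by omega⟩ with hm
  constructor
  · intro h
    have hsub : (Finset.Iic m).image σ ⊆ Finset.univ.filter fun i => x i ≤ t := by
      intro i hi
      simp only [Finset.mem_image, Finset.mem_Iic] at hi
      obtain ⟨j, hj, rfl⟩ := hi
      simp only [Finset.mem_filter, Finset.mem_univ, true_and]
      exact le_trans (hmono hj) h
    have hcard := Finset.card_le_card hsub
    rwa [Finset.card_image_of_injective _ (Equiv.injective σ), Fin.card_Iic,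
      hm, show ((⟨k - 1, by omega⟩ : Fin n) : ℕ) + 1 = k by simp; omega] at hcard
  · intro h
    set S := Finset.univ.filter fun i => x i ≤ t with hS
    set T := S.image σ.symm with hT
    have hTcard : k ≤ T.card := by
      rw [hT, Finset.card_image_of_injective _ (Equiv.injective σ.symm)]
      exact h
    have hex : ∃ j ∈ T, m ≤ j := by
      by_contra hcon
      push_neg at hcon
      have : T ⊆ Finset.Iio m := fun j hj => Finset.mem_Iio.mpr (hcon j hj)
      have := Finset.card_le_card this
      rw [Fin.card_Iio] at this
      have : (m : ℕ) = k - 1 := rfl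
      omega
    obtain ⟨j, hjT, hmj⟩ := hex
    obtain ⟨i, hiS, rfl⟩ := Finset.mem_image.mp hjT
    have hxi : x i ≤ t := (Finset.mem_filter.mp hiS).2
    calc orderStat x m = (x ∘ σ) m := rfl
      _ ≤ (x ∘ σ) (σ.symm i) := hmono hmj
      _ = x i := by simp
      _ ≤ t := hxi

end Aux2

end AuxB

/-- **Order statistics of i.i.d. nearly sub-uniform random variables are
stochastically dominated by shifted Beta order statistics:** if
`P(X₁ ≤ u) ≥ u - c` for all `u ∈ [0,1]`, then the `k`-th smallest order statistic
satisfies `P(X₍ₖ₎ ≤ t) ≥ P(B + c ≤ t)` for `B ∼ Beta(k, n - k + 1)`, i.e. the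
right-hand side equals the Beta CDF evaluated at `t - c`. -/
theorem orderStat_dominated_by_shifted_beta
    {Ω : Type*} [MeasurableSpace Ω] (P : Measure Ω) [IsProbabilityMeasure P]
    (c : ℝ) (hc : 0 ≤ c)
    (n : ℕ) (X : Fin n → Ω → ℝ)
    (hmeas : ∀ i, Measurable (X i))
    (hiid : iIndepFun X P)
    (hident : ∀ i j, IdentDistrib (X i) (X j) P P)
    (hrange : ∀ i ω, X i ω ∈ Set.Icc (0 : ℝ) 1)
    (hsub : ∀ i, ∀ u ∈ Set.Icc (0 : ℝ) 1, ENNReal.ofReal (u - c) ≤ P {ω | X i ω ≤ u})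
    (k : ℕ) (hk1 : 1 ≤ k) (hkn : k ≤ n) (t : ℝ) :
    betaCDF k n (t - c) ≤
      (P {ω | orderStat (fun i => X i ω) ⟨k - 1, by omega⟩ ≤ t}).toReal := by
  classical
  by_cases hts : t - c ≤ 0
  · have hsub0 : Set.Icc (0:ℝ) 1 ∩ Set.Iic (t - c) ⊆ {0} := by
      intro x hx
      have : x = 0 := le_antisymm (le_trans hx.2 hts) hx.1.1
      simp [this]
    have h0 : volume (Set.Icc (0:ℝ) 1 ∩ Set.Iic (t - c)) = 0 :=
      measure_mono_null hsub0 (measure_singleton 0)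
    have hnum : ∫ x in Set.Icc (0:ℝ) 1 ∩ Set.Iic (t - c),
        x ^ (k - 1) * (1 - x) ^ (n - k) = 0 := by
      rw [Measure.restrict_eq_zero.mpr h0, integral_zero_measure]
    rw [betaCDF, hnum, zero_div]
    exact ENNReal.toReal_nonneg
  · push_neg at hts
    have ht0 : 0 < t := lt_of_lt_of_le hts (by linarith)
    by_cases ht1 : 1 ≤ t
    · have hset : {ω | orderStat (fun i => X i ω) ⟨k - 1, by omega⟩ ≤ t} = Set.univ := by
        ext ω
        simp only [Set.mem_setOf_eq, Set.mem_univ, iff_true]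
        exact le_trans (hrange _ ω).2 ht1
      rw [hset, measure_univ, ENNReal.toReal_one]
      by_cases h1c : t - c ≤ 1
      · rw [betaCDF_eq hk1 hkn (le_of_lt hts) h1c]
        calc Ftail k n (t - c) ≤ Ftail k n 1 :=
              Ftail_mono hk1 hkn (le_of_lt hts) h1c le_rfl
          _ = 1 := Ftail_one hkn
      · push_neg at h1c
        have hseteq : Set.Icc (0:ℝ) 1 ∩ Set.Iic (t - c) = Set.Icc 0 1 := by
          ext x
          simp only [Set.mem_inter_iff, Set.mem_Icc, Set.mem_Iic]
          exact ⟨fun h => h.1, fun h => ⟨h, le_trans h.2 (le_of_lt h1c)⟩⟩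
        have hval : ∫ x in Set.Icc (0:ℝ) 1, x ^ (k - 1) * (1 - x) ^ (n - k)
            = 1 / ((n : ℝ) * ((n - 1).choose (k - 1))) := by
          rw [setInt_eq zero_le_one, integral_identity hk1 hkn, Ftail_zero hk1,
            Ftail_one hkn, sub_zero]
        have hpos : 0 < ∫ x in Set.Icc (0:ℝ) 1, x ^ (k - 1) * (1 - x) ^ (n - k) := by
          rw [hval]
          exact div_pos one_pos (Dpos hk1 hkn)
        rw [betaCDF, hseteq, div_self (ne_of_gt hpos)]
    · push_neg at ht1
      have hs1 : t - c ≤ 1 := by linarith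
      have hn : 0 < n := by omega
      have hset : {ω | orderStat (fun i => X i ω) ⟨k - 1, by omega⟩ ≤ t}
          = {ω | k ≤ (Finset.univ.filter fun i => X i ω ≤ t).card} := by
        ext ω
        exact orderStat_le_iff _ k hk1 hkn t
      rw [hset, binomial_count P X hmeas hiid hident t k hkn hn,
        betaCDF_eq hk1 hkn (le_of_lt hts) hs1]
      have hps : t - c ≤ (P {ω | X ⟨0, hn⟩ ω ≤ t}).toReal := by
        have h := hsub ⟨0, hn⟩ t ⟨le_of_lt ht0, le_of_lt ht1⟩
        have h2 := ENNReal.toReal_mono (measure_ne_top P _) h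
        rwa [ENNReal.toReal_ofReal (le_of_lt hts)] at h2
      have hp1 : (P {ω | X ⟨0, hn⟩ ω ≤ t}).toReal ≤ 1 := by
        have := ENNReal.toReal_mono ENNReal.one_ne_top
          (prob_le_one (μ := P) (s := {ω | X ⟨0, hn⟩ ω ≤ t}))
        simpa using this
      exact Ftail_mono hk1 hkn (le_of_lt hts) hps hp1
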